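/- For the case n = 1: if f(z) = ∑_{m≥1} c_m e^{2πimz} is holomorphic on the upper half-plane with c_m = O(m^M), and the integral ∫_{i∞}^0 f(z) z^{s-1} dz converges (taken along the imaginary axis), then for Re(s) > M + 1 it equals -Γ(s) · (-2πi)^{-s} ∑_{m≥1} c_m m^{-s}. -/

import Mathlib

open scoped BigOperators

private lemma aux_cpow_ofReal_mul {r : ℝ} (hr : 0 < r) {z : ℂ} (hz : z ≠ 0) (w : ℂ) :
    ((r : ℂ) * z) ^ w = (r : ℂ) ^ w * z ^ w := by
  rw [Complex.cpow_def_of_ne_zero (mul_ne_zero (Complex.ofReal_ne_zero.mpr hr.ne') hz),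
    Complex.cpow_def_of_ne_zero (Complex.ofReal_ne_zero.mpr hr.ne'),
    Complex.cpow_def_of_ne_zero hz, Complex.log_ofReal_mul hr hz, add_mul, Complex.exp_add, Complex.ofReal_log hr.le]

private lemma aux_neg_I_cpow (s : ℂ) : (-Complex.I) ^ (-s) = Complex.I ^ s := by
  rw [Complex.cpow_def_of_ne_zero (neg_ne_zero.mpr Complex.I_ne_zero),
    Complex.cpow_def_of_ne_zero Complex.I_ne_zero, Complex.log_neg_I, Complex.log_I]
  congr 1
  ring

/-- n = 1 Mellin transform: for f(z) = ∑_{m≥1} c_m e^{2πimz} with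
c_m = O(m^M), and Re(s) > M+1, the convergent integral ∫_{i∞}^0 f(z) z^{s-1} dz
(along the imaginary axis, z = it) equals -Γ(s)·(-2πi)^{-s} ∑ c_m m^{-s}. -/
theorem mellin_transform_cusp_form
    (f : ℂ → ℂ) (c : ℕ → ℂ) (C M : ℝ) (hC : 0 < C) (hM : 0 < M)
    (hb : ∀ m : ℕ, 1 ≤ m → ‖c m‖ ≤ C * (m : ℝ) ^ M)
    (hf : ∀ z : ℂ, 0 < z.im →
      f z = ∑' m : ℕ+, c m * Complex.exp (2 * Real.pi * Complex.I * (m : ℂ) * z))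
    (s : ℂ) (hs : M + 1 < s.re)
    (hint : MeasureTheory.IntegrableOn
      (fun t : ℝ => f ((t : ℂ) * Complex.I) * ((t : ℂ) * Complex.I) ^ (s - 1))
      (Set.Ioi 0)) :
    -(∫ t in Set.Ioi (0 : ℝ),
        f ((t : ℂ) * Complex.I) * ((t : ℂ) * Complex.I) ^ (s - 1) * Complex.I)
      = -(Complex.Gamma s * (-(2 * Real.pi * Complex.I)) ^ (-s) *
          ∑' m : ℕ+, c m * ((m : ℕ) : ℂ) ^ (-s)) := by
  have hπ : (0 : ℝ) < Real.pi := Real.pi_pos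
  have hs0 : 0 < s.re := by linarith
  set F : ℝ → ℂ := fun t => f ((t : ℂ) * Complex.I) with hFdef
  have hp : ∀ m : ℕ+, c m = 0 ∨ 0 < 2 * Real.pi * ((m : ℕ) : ℝ) := by
    intro m
    right
    have : (0 : ℝ) < ((m : ℕ) : ℝ) := by exact_mod_cast m.pos
    positivity
  -- Fourier expansion as a HasSum statement
  have hF : ∀ t ∈ Set.Ioi (0 : ℝ),
      HasSum (fun m : ℕ+ => c m * (Real.exp (-(2 * Real.pi * ((m : ℕ) : ℝ)) * t) : ℂ))
        (F t) := by
    intro t ht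
    simp only [Set.mem_Ioi] at ht
    have hr1 : Real.exp (-(2 * Real.pi * t)) < 1 :=
      Real.exp_lt_one_iff.mpr (by nlinarith)
    have hsum0 : Summable fun n : ℕ =>
        C * ((n : ℝ) ^ (⌈M⌉₊) * Real.exp (-(2 * Real.pi * t)) ^ n) :=
      (summable_pow_mul_geometric_of_norm_lt_one (⌈M⌉₊)
        (by rwa [Real.norm_eq_abs, abs_of_pos (Real.exp_pos _)])).mul_left C
    have hsum1 : Summable fun m : ℕ+ =>
        C * (((m : ℕ) : ℝ) ^ (⌈M⌉₊) * Real.exp (-(2 * Real.pi * t)) ^ (m : ℕ)) :=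
      hsum0.comp_injective (fun a b h => PNat.coe_injective h)
    have hsum : Summable fun m : ℕ+ =>
        c m * (Real.exp (-(2 * Real.pi * ((m : ℕ) : ℝ)) * t) : ℂ) := by
      apply Summable.of_norm
      refine Summable.of_nonneg_of_le (fun m => norm_nonneg _) (fun m => ?_) hsum1
      have hm1 : (1 : ℝ) ≤ ((m : ℕ) : ℝ) := by exact_mod_cast m.one_le
      have hexp : Real.exp (-(2 * Real.pi * ((m : ℕ) : ℝ)) * t)
          = Real.exp (-(2 * Real.pi * t)) ^ (m : ℕ) := by
        rw [← Real.exp_nat_mul]; congr 1; ring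
      rw [norm_mul, Complex.norm_real, Real.norm_eq_abs, abs_of_pos (Real.exp_pos _), hexp]
      have h1 : ‖c m‖ ≤ C * ((m : ℕ) : ℝ) ^ M := hb m m.one_le
      have h2 : ((m : ℕ) : ℝ) ^ M ≤ ((m : ℕ) : ℝ) ^ (⌈M⌉₊ : ℕ) := by
        rw [← Real.rpow_natCast]
        exact Real.rpow_le_rpow_of_exponent_le hm1 (Nat.le_ceil M)
      have h3 : (0 : ℝ) ≤ Real.exp (-(2 * Real.pi * t)) ^ (m : ℕ) :=
        pow_nonneg (Real.exp_pos _).le _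
      calc ‖c m‖ * Real.exp (-(2 * Real.pi * t)) ^ (m : ℕ)
          ≤ (C * ((m : ℕ) : ℝ) ^ (⌈M⌉₊ : ℕ)) * Real.exp (-(2 * Real.pi * t)) ^ (m : ℕ) := by
            apply mul_le_mul_of_nonneg_right _ h3
            exact h1.trans (mul_le_mul_of_nonneg_left h2 hC.le)
        _ = C * (((m : ℕ) : ℝ) ^ (⌈M⌉₊) * Real.exp (-(2 * Real.pi * t)) ^ (m : ℕ)) := by ring
    have him : (0 : ℝ) < ((t : ℂ) * Complex.I).im := by simp [ht]
    have htsum := hf ((t : ℂ) * Complex.I) him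
    have hterm : ∀ m : ℕ+,
        c m * Complex.exp (2 * Real.pi * Complex.I * (m : ℂ) * ((t : ℂ) * Complex.I))
        = c m * (Real.exp (-(2 * Real.pi * ((m : ℕ) : ℝ)) * t) : ℂ) := by
      intro m
      congr 1
      rw [Complex.ofReal_exp]
      congr 1
      have h4 : (2 * (Real.pi : ℂ) * Complex.I * (m : ℂ) * ((t : ℂ) * Complex.I))
          = (2 * (Real.pi : ℂ) * (m : ℂ) * (t : ℂ)) * (Complex.I * Complex.I) := by ring
      rw [h4, Complex.I_mul_I]
      push_cast
      ring
    have : F t = ∑' m : ℕ+, c m * (Real.exp (-(2 * Real.pi * ((m : ℕ) : ℝ)) * t) : ℂ) := by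
      rw [hFdef]
      simp only
      rw [htsum, tsum_congr hterm]
    rw [this]
    exact hsum.hasSum
  -- summability of the Dirichlet-type series
  have h_sum : Summable fun m : ℕ+ => ‖c m‖ / (2 * Real.pi * ((m : ℕ) : ℝ)) ^ s.re := by
    have hbase : Summable fun n : ℕ => (n : ℝ) ^ (M - s.re) :=
      Real.summable_nat_rpow.mpr (by linarith)
    have hbase' : Summable fun m : ℕ+ =>
        (C / (2 * Real.pi) ^ s.re) * ((m : ℕ) : ℝ) ^ (M - s.re) :=
      (hbase.comp_injective (fun a b h => PNat.coe_injective h)).mul_left _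
    refine Summable.of_nonneg_of_le (fun m => by positivity) (fun m => ?_) hbase'
    have hm0 : (0 : ℝ) < ((m : ℕ) : ℝ) := by exact_mod_cast m.pos
    have h1 : ‖c m‖ ≤ C * ((m : ℕ) : ℝ) ^ M := hb m m.one_le
    have hsplit : (2 * Real.pi * ((m : ℕ) : ℝ)) ^ s.re
        = (2 * Real.pi) ^ s.re * ((m : ℕ) : ℝ) ^ s.re :=
      Real.mul_rpow (by positivity) hm0.le
    have h2π : (0 : ℝ) < (2 * Real.pi) ^ s.re := by positivity
    have hms : (0 : ℝ) < ((m : ℕ) : ℝ) ^ s.re := Real.rpow_pos_of_pos hm0 _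
    calc ‖c m‖ / (2 * Real.pi * ((m : ℕ) : ℝ)) ^ s.re
        ≤ (C * ((m : ℕ) : ℝ) ^ M) / (2 * Real.pi * ((m : ℕ) : ℝ)) ^ s.re := by
          gcongr
      _ = (C / (2 * Real.pi) ^ s.re) * ((m : ℕ) : ℝ) ^ (M - s.re) := by
          rw [hsplit, Real.rpow_sub hm0]
          field_simp
  have key := hasSum_mellin hp hs0 hF h_sum
  have hmel := key.tsum_eq
  -- rewrite the integral as I^s * mellin F s
  have hIs : Complex.I ^ (s - 1) * Complex.I = Complex.I ^ s := by
    conv_rhs => rw [show s = s - 1 + 1 by ring]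
    rw [Complex.cpow_add _ _ Complex.I_ne_zero, Complex.cpow_one]
  have hIeq : (∫ t in Set.Ioi (0 : ℝ),
      f ((t : ℂ) * Complex.I) * ((t : ℂ) * Complex.I) ^ (s - 1) * Complex.I)
      = Complex.I ^ s * mellin F s := by
    rw [mellin, ← MeasureTheory.integral_const_mul]
    refine MeasureTheory.setIntegral_congr_fun measurableSet_Ioi (fun t ht => ?_)
    have ht' : 0 < t := ht
    rw [aux_cpow_ofReal_mul ht' Complex.I_ne_zero (s - 1), smul_eq_mul]
    calc f ((t : ℂ) * Complex.I) * ((t : ℂ) ^ (s - 1) * Complex.I ^ (s - 1)) * Complex.I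
        = (Complex.I ^ (s - 1) * Complex.I) * ((t : ℂ) ^ (s - 1) * f ((t : ℂ) * Complex.I)) := by
          ring
      _ = Complex.I ^ s * ((t : ℂ) ^ (s - 1) * F t) := by rw [hIs]
  -- the branch factor
  have hfactor : (-(2 * (Real.pi : ℂ) * Complex.I)) ^ (-s)
      = ((2 * Real.pi : ℝ) : ℂ) ^ (-s) * Complex.I ^ s := by
    have h : -(2 * (Real.pi : ℂ) * Complex.I) = ((2 * Real.pi : ℝ) : ℂ) * (-Complex.I) := by
      push_cast; ring
    rw [h, aux_cpow_ofReal_mul (by positivity) (neg_ne_zero.mpr Complex.I_ne_zero),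
      aux_neg_I_cpow]
  -- termwise identity
  have hterm2 : ∀ m : ℕ+,
      Complex.I ^ s * (Complex.Gamma s * c m / ((2 * Real.pi * ((m : ℕ) : ℝ) : ℝ) : ℂ) ^ s)
      = (Complex.Gamma s * (-(2 * (Real.pi : ℂ) * Complex.I)) ^ (-s))
        * (c m * ((m : ℕ) : ℂ) ^ (-s)) := by
    intro m
    have hm0 : (0 : ℝ) < ((m : ℕ) : ℝ) := by exact_mod_cast m.pos
    have hcast : ((2 * Real.pi * ((m : ℕ) : ℝ) : ℝ) : ℂ)
        = ((2 * Real.pi : ℝ) : ℂ) * (((m : ℕ) : ℝ) : ℂ) := by push_cast; ring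
    have hsplit : ((2 * Real.pi * ((m : ℕ) : ℝ) : ℝ) : ℂ) ^ s
        = ((2 * Real.pi : ℝ) : ℂ) ^ s * (((m : ℕ) : ℝ) : ℂ) ^ s := by
      rw [hcast, Complex.mul_cpow_ofReal_nonneg (by positivity) hm0.le]
    have h2π : ((2 * Real.pi : ℝ) : ℂ) ^ s ≠ 0 := by
      rw [Ne, Complex.cpow_eq_zero_iff, not_and_or]
      exact Or.inl (Complex.ofReal_ne_zero.mpr (by positivity))
    have hm : (((m : ℕ) : ℝ) : ℂ) ^ s ≠ 0 := by
      rw [Ne, Complex.cpow_eq_zero_iff, not_and_or]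
      exact Or.inl (Complex.ofReal_ne_zero.mpr hm0.ne')
    rw [hfactor, hsplit, Complex.cpow_neg, Complex.cpow_neg, Complex.ofReal_natCast]
    field_simp
  -- put everything together
  have hfinal : (∫ t in Set.Ioi (0 : ℝ),
      f ((t : ℂ) * Complex.I) * ((t : ℂ) * Complex.I) ^ (s - 1) * Complex.I)
      = Complex.Gamma s * (-(2 * (Real.pi : ℂ) * Complex.I)) ^ (-s)
        * ∑' m : ℕ+, c m * ((m : ℕ) : ℂ) ^ (-s) := by
    calc (∫ t in Set.Ioi (0 : ℝ),
        f ((t : ℂ) * Complex.I) * ((t : ℂ) * Complex.I) ^ (s - 1) * Complex.I)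
        = Complex.I ^ s * mellin F s := hIeq
      _ = Complex.I ^ s * ∑' m : ℕ+,
            Complex.Gamma s * c m / ((2 * Real.pi * ((m : ℕ) : ℝ) : ℝ) : ℂ) ^ s := by
          rw [hmel]
      _ = ∑' m : ℕ+, Complex.I ^ s *
            (Complex.Gamma s * c m / ((2 * Real.pi * ((m : ℕ) : ℝ) : ℝ) : ℂ) ^ s) :=
          tsum_mul_left.symm
      _ = ∑' m : ℕ+, (Complex.Gamma s * (-(2 * (Real.pi : ℂ) * Complex.I)) ^ (-s))
            * (c m * ((m : ℕ) : ℂ) ^ (-s)) := tsum_congr hterm2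
      _ = Complex.Gamma s * (-(2 * (Real.pi : ℂ) * Complex.I)) ^ (-s)
            * ∑' m : ℕ+, c m * ((m : ℕ) : ℂ) ^ (-s) := tsum_mul_left
  rw [hfinal]
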